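/- Let k ≥ 1, set ζ = e^{2πi/(2k+1)} ∈ ℂ, and let f : S¹ → ℝ^{2k+1} be a continuous map on the unit circle S¹ ⊆ ℂ with f(−z) = −f(z) for all z ∈ S¹. Then there exist signs e₀, …, e_{2k} ∈ {+1, −1} and z ∈ S¹ such that 0 ∈ ℝ^{2k+1} lies in the convex hull of the image f(X) of the finite set X = {eᵢ·z·ζⁱ : i = 0, …, 2k} ⊆ S¹, and X has diameter at most π − π/(2k+1). -/

import Mathlib

open Metric

/-- The arc-length metric on the unit circle in `ℂ`: for unit complex numbers `z, w`
we have `circleDist z (exp (θ * I) * z) = |θ|` whenever `|θ| ≤ π`. -/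
noncomputable def circleDist (z w : ℂ) : ℝ := |Complex.arg (w / z)|

lemma arg_le_aux (n : ℕ) (hn : 0 < n) (w : ℂ) (hw : w ^ (2 * n) = 1) (hw1 : w ≠ -1) :
    |Complex.arg w| ≤ Real.pi - Real.pi / n := by
  have hnR : (0 : ℝ) < n := by exact_mod_cast hn
  have habs : ‖w‖ = 1 := by
    have h1 : ‖w‖ ^ (2 * n) = 1 := by rw [← norm_pow, hw, norm_one]
    have h2 := norm_nonneg w
    by_contra hne
    rcases lt_or_gt_of_ne hne with h | h
    · have := pow_lt_one₀ h2 h (by omega : 2 * n ≠ 0)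
      linarith
    · have := one_lt_pow₀ h (by omega : 2 * n ≠ 0)
      linarith
  set θ := Complex.arg w with hθdef
  have hwexp : Complex.exp (θ * Complex.I) = w := by
    have := Complex.norm_mul_exp_arg_mul_I w
    rwa [habs, Complex.ofReal_one, one_mul] at this
  have hexp1 : Complex.exp ((2 * n : ℕ) * (↑θ * Complex.I)) = 1 := by
    rw [Complex.exp_nat_mul, hwexp, hw]
  obtain ⟨m, hm⟩ := Complex.exp_eq_one_iff.mp hexp1
  have hreal : (2 * n : ℝ) * θ = m * (2 * Real.pi) := by
    have h2 : ((2 * n * θ : ℝ) : ℂ) * Complex.I = ((m * (2 * Real.pi) : ℝ) : ℂ) * Complex.I := by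
      push_cast at hm ⊢
      linear_combination hm
    have h3 := mul_right_cancel₀ Complex.I_ne_zero h2
    exact_mod_cast h3
  have hθval : θ = m * Real.pi / n := by
    field_simp
    linarith
  have hθlt : θ < Real.pi := by
    rcases lt_or_eq_of_le (Complex.arg_le_pi w) with h | h
    · exact h
    · exfalso
      apply hw1
      rw [← hwexp, show (θ : ℂ) = (Real.pi : ℂ) from by exact_mod_cast h]
      exact Complex.exp_pi_mul_I
  have hθgt : -Real.pi < θ := Complex.neg_pi_lt_arg w
  have habsθ : |θ| = |(m : ℝ)| * Real.pi / n := by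
    rw [hθval, abs_div, abs_mul, abs_of_pos Real.pi_pos, abs_of_pos hnR]
  have hmabs : |(m : ℝ)| < n := by
    have h1 : |θ| < Real.pi := abs_lt.mpr ⟨hθgt, hθlt⟩
    rw [habsθ, div_lt_iff₀ hnR] at h1
    nlinarith [Real.pi_pos, abs_nonneg (m : ℝ)]
  have hmle : |(m : ℝ)| ≤ (n : ℝ) - 1 := by
    have h1 : |m| < (n : ℤ) := by
      rw [← Int.cast_abs] at hmabs
      exact_mod_cast hmabs
    have h2 : |m| ≤ (n : ℤ) - 1 := by omega
    have h3 : ((|m| : ℤ) : ℝ) ≤ (((n : ℤ) - 1 : ℤ) : ℝ) := by exact_mod_cast h2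
    push_cast at h3
    linarith
  calc |θ| = |(m : ℝ)| * Real.pi / n := habsθ
    _ ≤ ((n : ℝ) - 1) * Real.pi / n := by gcongr
    _ = Real.pi - Real.pi / n := by field_simp

/-- Theorem 1.1, first part. For an odd continuous map
`f : S¹ → ℝ^{2k+1}` there exist signs `eᵢ ∈ {±1}` and `z ∈ S¹` such that `0` lies in the
convex hull of `f(X)` where `X = {eᵢ z ζ^i : i = 0, …, 2k}`, a set of diameter at most
`π - π/(2k+1)`. -/
theorem stmt2 (k : ℕ) (hk : 1 ≤ k)
    (ζ : ℂ) (hζ : ζ = Complex.exp (2 * Real.pi * Complex.I / (2 * k + 1)))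
    (f : ℂ → EuclideanSpace ℝ (Fin (2 * k + 1)))
    (hf : ContinuousOn f (sphere (0 : ℂ) 1))
    (hodd : ∀ z ∈ sphere (0 : ℂ) 1, f (-z) = -f z) :
    ∃ (e : Fin (2 * k + 1) → ℝ) (z : ℂ),
      (∀ i, e i = 1 ∨ e i = -1) ∧ ‖z‖ = 1 ∧
      (0 : EuclideanSpace ℝ (Fin (2 * k + 1))) ∈
        convexHull ℝ (f '' Set.range (fun i : Fin (2 * k + 1) => (e i : ℂ) * z * ζ ^ (i : ℕ))) ∧
      ∀ x ∈ Set.range (fun i : Fin (2 * k + 1) => (e i : ℂ) * z * ζ ^ (i : ℕ)),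
        ∀ y ∈ Set.range (fun i : Fin (2 * k + 1) => (e i : ℂ) * z * ζ ^ (i : ℕ)),
          circleDist x y ≤ Real.pi - Real.pi / (2 * k + 1) := by
  have hn0 : 0 < 2 * k + 1 := by omega
  have hnC : ((2 * k + 1 : ℕ) : ℂ) ≠ 0 := Nat.cast_ne_zero.mpr (by omega)
  -- ζ basic facts
  have hζeq : ζ = Complex.exp (2 * Real.pi * Complex.I / ((2 * k + 1 : ℕ) : ℂ)) := by
    rw [hζ]; norm_cast
  have hprim : IsPrimitiveRoot ζ (2 * k + 1) := by
    rw [hζeq]; exact Complex.isPrimitiveRoot_exp _ (by omega)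
  have hζn : ζ ^ (2 * k + 1) = 1 := hprim.pow_eq_one
  have hζabs : ‖ζ‖ = 1 := by
    rw [hζ, show 2 * (Real.pi : ℂ) * Complex.I / (2 * (k : ℂ) + 1)
        = ((2 * Real.pi / (2 * (k : ℝ) + 1) : ℝ) : ℂ) * Complex.I by push_cast; ring]
    exact Complex.norm_exp_ofReal_mul_I _
  -- membership helpers
  have hmem : ∀ z : ℂ, ‖z‖ = 1 → ∀ j : Fin (2 * k + 1),
      z * ζ ^ (j : ℕ) ∈ sphere (0 : ℂ) 1 := by
    intro z hz j
    rw [mem_sphere_zero_iff_norm, norm_mul, norm_pow, hz, hζabs, one_pow, one_mul]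
  -- the determinant function
  set M : ℂ → Matrix (Fin (2 * k + 1)) (Fin (2 * k + 1)) ℝ :=
    fun z => Matrix.of fun i j => f (z * ζ ^ (j : ℕ)) i with hM
  set D : ℂ → ℝ := fun z => (M z).det with hD
  have hDc : ContinuousOn D (sphere (0 : ℂ) 1) := by
    have hMc : ContinuousOn M (sphere (0 : ℂ) 1) := by
      apply continuousOn_pi.mpr; intro i
      apply continuousOn_pi.mpr; intro j
      exact (by fun_prop : Continuous fun x : EuclideanSpace ℝ (Fin (2 * k + 1)) => x i).comp_continuousOn
        (hf.comp (continuous_mul_right _).continuousOn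
          (fun z hz => hmem z (by simpa [mem_sphere_zero_iff_norm] using hz) j))
    exact (continuous_id.matrix_det).comp_continuousOn hMc
  have hDodd : ∀ z : ℂ, ‖z‖ = 1 → D (-z) = -D z := by
    intro z hz
    have hMeq : M (-z) = -M z := by
      ext i j
      have : -z * ζ ^ (j : ℕ) = -(z * ζ ^ (j : ℕ)) := by ring
      simp only [hM, Matrix.of_apply, this, hodd _ (hmem z hz j), Matrix.neg_apply]
      rfl
    rw [hD]
    simp only [hMeq, Matrix.det_neg, Fintype.card_fin]
    rw [Odd.neg_one_pow ⟨k, by ring⟩]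
    ring
  -- find a zero of D on the circle via IVT
  obtain ⟨z₀, hz₀, hDz₀⟩ : ∃ z₀ : ℂ, ‖z₀‖ = 1 ∧ D z₀ = 0 := by
    set g : ℝ → ℝ := fun θ => D (Complex.exp (θ * Complex.I)) with hg
    have hnorm : ∀ θ : ℝ, ‖Complex.exp (θ * Complex.I)‖ = 1 :=
      fun θ => Complex.norm_exp_ofReal_mul_I θ
    have hgc : ContinuousOn g (Set.Icc 0 Real.pi) := by
      apply hDc.comp
      · exact (Complex.continuous_exp.comp
          ((Complex.continuous_ofReal.mul continuous_const))).continuousOn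
      · intro θ _; simpa [mem_sphere_zero_iff_norm] using hnorm θ
    have hg0 : g 0 = D 1 := by simp [hg]
    have hgπ : g Real.pi = -D 1 := by
      have h1 : Complex.exp ((Real.pi : ℂ) * Complex.I) = -1 := Complex.exp_pi_mul_I
      rw [hg]
      simp only [h1]
      rw [show (-1 : ℂ) = -(1 : ℂ) from rfl, hDodd 1 (by simp)]
    rcases le_total (D 1) 0 with h | h
    · have : (0 : ℝ) ∈ Set.Icc (g 0) (g Real.pi) := by
        rw [hg0, hgπ]; constructor <;> linarith
      obtain ⟨θ₀, _, hθ₀⟩ := intermediate_value_Icc Real.pi_pos.le hgc this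
      exact ⟨Complex.exp (θ₀ * Complex.I), hnorm θ₀, hθ₀⟩
    · have : (0 : ℝ) ∈ Set.Icc (g Real.pi) (g 0) := by
        rw [hg0, hgπ]; constructor <;> linarith
      obtain ⟨θ₀, _, hθ₀⟩ := intermediate_value_Icc' Real.pi_pos.le hgc this
      exact ⟨Complex.exp (θ₀ * Complex.I), hnorm θ₀, hθ₀⟩
  have hz₀ne : z₀ ≠ 0 := by intro h; rw [h] at hz₀; simp at hz₀
  -- linear dependence
  obtain ⟨v, hv0, hvM⟩ := Matrix.exists_mulVec_eq_zero_iff.mpr hDz₀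
  -- signs and weights
  set e : Fin (2 * k + 1) → ℝ := fun i => if 0 ≤ v i then 1 else -1 with he
  have hepm : ∀ i, e i = 1 ∨ e i = -1 := by
    intro i; by_cases h : 0 ≤ v i <;> simp [he, h]
  have hev : ∀ i, e i * |v i| = v i := by
    intro i; by_cases h : 0 ≤ v i
    · simp [he, h, abs_of_nonneg h]
    · simp [he, h, abs_of_neg (lt_of_not_ge h)]
  set g : Fin (2 * k + 1) → ℂ := fun i => (e i : ℂ) * z₀ * ζ ^ (i : ℕ) with hgdef
  have hgnorm : ∀ i, ‖g i‖ = 1 := by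
    intro i
    have : ‖(e i : ℂ)‖ = 1 := by
      rcases hepm i with h | h <;> simp [h]
    rw [hgdef]
    simp only [norm_mul, norm_pow, this, hz₀, hζabs, one_pow, one_mul, mul_one]
  have hgne : ∀ i, g i ≠ 0 := by
    intro i h; have := hgnorm i; rw [h] at this; simp at this
  have heC : ∀ i, ((e i : ℂ)) ≠ 0 := by
    intro i; rcases hepm i with h | h <;> simp [h]
  -- f (g i) = e i • f (z₀ ζ^i)
  have hfg : ∀ i, f (g i) = e i • f (z₀ * ζ ^ (i : ℕ)) := by
    intro i
    rcases hepm i with h | h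
    · rw [hgdef]; simp only [h]; push_cast; rw [one_mul, one_smul]
    · rw [hgdef]; simp only [h]; push_cast
      rw [show (-1 : ℂ) * z₀ * ζ ^ (i : ℕ) = -(z₀ * ζ ^ (i : ℕ)) by ring,
        hodd _ (hmem z₀ hz₀ i), neg_smul, one_smul]
  -- the key zero-sum
  have hsum : ∑ i : Fin (2 * k + 1), |v i| • f (g i) = 0 := by
    have h1 : ∀ i : Fin (2 * k + 1), |v i| • f (g i) = v i • f (z₀ * ζ ^ (i : ℕ)) := by
      intro i
      rw [hfg i, smul_smul, mul_comm (|v i|) (e i), hev i]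
    simp_rw [h1]
    apply PiLp.ext
    intro c
    have h2 := congrFun hvM c
    simp only [Matrix.mulVec, dotProduct, hM, Matrix.of_apply, Pi.zero_apply] at h2
    simp only [PiLp.zero_apply]
    rw [WithLp.ofLp_sum, Finset.sum_apply]
    simp only [WithLp.ofLp_smul, Pi.smul_apply, PiLp.smul_apply, smul_eq_mul]
    rw [← h2]
    exact Finset.sum_congr rfl fun i _ => mul_comm _ _
  have hspos : 0 < ∑ i : Fin (2 * k + 1), |v i| := by
    obtain ⟨i₀, hi₀⟩ := Function.ne_iff.mp hv0
    exact Finset.sum_pos' (fun i _ => abs_nonneg _)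
      ⟨i₀, Finset.mem_univ _, abs_pos.mpr hi₀⟩
  refine ⟨e, z₀, hepm, hz₀, ?_, ?_⟩
  · have hc := Finset.centerMass_mem_convexHull (Finset.univ)
      (w := fun i => |v i|) (z := fun i => f (g i))
      (fun i _ => abs_nonneg _) hspos
      (fun i _ => Set.mem_image_of_mem f (Set.mem_range_self (f := g) i))
    rwa [Finset.centerMass, hsum, smul_zero] at hc
  · rintro x ⟨i, rfl⟩ y ⟨j, rfl⟩
    show |Complex.arg (g j / g i)| ≤ _
    have hkey : |Complex.arg (g j / g i)| ≤ Real.pi - Real.pi / ((2 * k + 1 : ℕ) : ℝ) := by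
      apply arg_le_aux (2 * k + 1) hn0
      · -- (g j / g i) ^ (2*(2k+1)) = 1
        have hp : ∀ l : Fin (2 * k + 1), (g l) ^ (2 * (2 * k + 1)) = z₀ ^ (2 * (2 * k + 1)) := by
          intro l
          have he2 : ((e l : ℂ)) ^ (2 * (2 * k + 1)) = 1 := by
            rcases hepm l with h | h
            · rw [h]; norm_num
            · rw [h]; push_cast; exact Even.neg_one_pow ⟨2 * k + 1, by ring⟩
          have hζ2 : (ζ ^ (l : ℕ)) ^ (2 * (2 * k + 1)) = 1 := by
            rw [← pow_mul, show (l : ℕ) * (2 * (2 * k + 1)) = (2 * k + 1) * (2 * (l : ℕ)) by ring,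
              pow_mul, hζn, one_pow]
          rw [hgdef]
          rw [mul_pow, mul_pow, he2, hζ2, one_mul, mul_one]
        rw [div_pow, hp i, hp j, div_self (pow_ne_zero _ hz₀ne)]
      · -- g j / g i ≠ -1
        intro hcon
        have hji : g j = -g i := by
          rw [div_eq_iff (hgne i)] at hcon
          linear_combination hcon
        have hpn : ∀ l : Fin (2 * k + 1), (g l) ^ (2 * k + 1) = (e l : ℂ) * z₀ ^ (2 * k + 1) := by
          intro l
          have heodd : ((e l : ℂ)) ^ (2 * k + 1) = (e l : ℂ) := by
            rcases hepm l with h | h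
            · simp [h]
            · rw [h]; push_cast; exact Odd.neg_one_pow ⟨k, by ring⟩
          have hζl : (ζ ^ (l : ℕ)) ^ (2 * k + 1) = 1 := by
            rw [← pow_mul, mul_comm, pow_mul, hζn, one_pow]
          rw [hgdef, mul_pow, mul_pow, heodd, hζl, mul_one]
        have h1 : (e j : ℂ) * z₀ ^ (2 * k + 1) = -((e i : ℂ) * z₀ ^ (2 * k + 1)) := by
          rw [← hpn j, ← hpn i, hji]
          rw [Odd.neg_pow ⟨k, by ring⟩]
        have h2 : (e j : ℂ) = -(e i : ℂ) := by
          have hz₀p : z₀ ^ (2 * k + 1) ≠ 0 := pow_ne_zero _ hz₀ne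
          have h1' : (e j : ℂ) * z₀ ^ (2 * k + 1) = (-(e i : ℂ)) * z₀ ^ (2 * k + 1) := by
            linear_combination h1
          exact mul_right_cancel₀ hz₀p h1'
        have h3 : ζ ^ (j : ℕ) = ζ ^ (i : ℕ) := by
          have := hji
          rw [hgdef] at this
          simp only at this
          rw [h2] at this
          have h4 : -((e i : ℂ) * z₀) * ζ ^ (j : ℕ) = -((e i : ℂ) * z₀) * ζ ^ (i : ℕ) := by
            linear_combination this
          exact mul_left_cancel₀ (by simp [heC i, hz₀ne]) h4
        have h5 : (j : ℕ) = (i : ℕ) := hprim.pow_inj j.isLt i.isLt h3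
        have h6 : i = j := Fin.ext h5.symm
        rw [h6] at h2
        have h7 : (e j : ℂ) = 0 := by linear_combination h2 / 2
        exact heC j h7
      
    convert hkey using 3
    push_cast
    ring
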